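/- Let d be a nonnegative integer and let p be a real polynomial of degree at most d such that |p(x)| ≤ 1 for all x ∈ [-1,1]. Then for every real y with |y| > 1, we have |p(y)| ≤ |T_d(y)|. -/

import Mathlib

open Polynomial Polynomial.Chebyshev Real Set

lemma natDegree_T_le : ∀ n : ℕ, (Polynomial.Chebyshev.T ℝ (n : ℤ)).natDegree ≤ n
  | 0 => by simp
  | 1 => by simp
  | (n + 2) => by
    have h1 := natDegree_T_le (n + 1)
    have h2 := natDegree_T_le n
    rw [show ((n + 2 : ℕ) : ℤ) = (n : ℤ) + 2 by push_cast; ring, T_add_two]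
    refine (natDegree_sub_le _ _).trans (max_le ?_ (h2.trans (by omega)))
    refine (natDegree_mul_le).trans ?_
    have : (2 * X : ℝ[X]).natDegree ≤ 1 := by
      refine natDegree_mul_le.trans ?_
      simp
    push_cast at h1
    omega

/-- A polynomial of degree at most `d` bounded by `1` on `[-1,1]` is dominated outside `[-1,1]`
by the Chebyshev polynomial `T_d`. -/
theorem chebyshev_extremal_growth (d : ℕ) (p : Polynomial ℝ) (hp : p.natDegree ≤ d)
    (hbdd : ∀ x ∈ Set.Icc (-1 : ℝ) 1, |p.eval x| ≤ 1) (y : ℝ) (hy : 1 < |y|) :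
    |p.eval y| ≤ |(Polynomial.Chebyshev.T ℝ (d : ℤ)).eval y| := by
  rcases Nat.eq_zero_or_pos d with rfl | hd
  · -- degree 0 case: p is constant
    rw [Nat.le_zero] at hp
    obtain ⟨a, rfl⟩ := Polynomial.natDegree_eq_zero.mp hp
    simpa using (hbdd 0 (by norm_num))
  by_contra hcon
  push_neg at hcon
  set A : ℝ := p.eval y with hA
  set B : ℝ := (Polynomial.Chebyshev.T ℝ (d : ℤ)).eval y with hB
  have hAB : |B| < |A| := hcon
  have hApos : 0 < |A| := (abs_nonneg B).trans_lt hAB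
  set r : ℝ[X] := C A * Polynomial.Chebyshev.T ℝ (d : ℤ) - C B * p with hr
  have hdpos : (0 : ℝ) < d := by exact_mod_cast hd
  -- nodes
  set s : ℕ → ℝ := fun k => Real.cos (k * π / d) with hs
  have hs_mem : ∀ k, s k ∈ Set.Icc (-1 : ℝ) 1 := fun k => ⟨Real.neg_one_le_cos _, Real.cos_le_one _⟩
  have hTs : ∀ k : ℕ, (Polynomial.Chebyshev.T ℝ (d : ℤ)).eval (s k) = (-1 : ℝ) ^ k := by
    intro k
    have := Polynomial.Chebyshev.T_real_cos (k * π / d) (d : ℤ)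
    rw [hs]
    rw [this]
    rw [show ((d : ℤ) : ℝ) * (k * π / d) = k * π by rw [Int.cast_natCast]; field_simp]
    have := Real.cos_nat_mul_pi_sub 0 k
    simpa using this
  have hs_anti : ∀ i j : ℕ, i < j → j ≤ d → s j < s i := by
    intro i j hij hjd
    apply Real.strictAntiOn_cos
    · constructor
      · positivity
      · rw [div_le_iff₀ hdpos]
        have : (i : ℝ) ≤ d := by exact_mod_cast (hij.le.trans hjd)
        nlinarith [Real.pi_pos]
    · constructor
      · positivity
      · rw [div_le_iff₀ hdpos]
        have : (j : ℝ) ≤ d := by exact_mod_cast hjd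
        nlinarith [Real.pi_pos]
    · have : (i : ℝ) < j := by exact_mod_cast hij
      have := Real.pi_pos
      gcongr
  -- sign alternation
  have hsign : ∀ k : ℕ, 0 < A * ((-1 : ℝ) ^ k * r.eval (s k)) := by
    intro k
    have hq : |p.eval (s k)| ≤ 1 := hbdd _ (hs_mem k)
    have hrk : r.eval (s k) = A * (-1 : ℝ) ^ k - B * p.eval (s k) := by
      simp [hr, hTs k]
    rw [hrk]
    have he : ((-1 : ℝ) ^ k) ^ 2 = 1 := by
      rw [← pow_mul, mul_comm, pow_mul]; norm_num
    have key : A * ((-1 : ℝ) ^ k * B * p.eval (s k)) ≤ |A| * |B| := by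
      calc A * ((-1 : ℝ) ^ k * B * p.eval (s k)) ≤ |A * ((-1 : ℝ) ^ k * B * p.eval (s k))| :=
            le_abs_self _
        _ = |A| * (|B| * |p.eval (s k)|) := by
            rw [abs_mul, abs_mul, abs_mul, abs_pow, abs_neg, abs_one, one_pow, one_mul]
        _ ≤ |A| * (|B| * 1) := by gcongr
        _ = |A| * |B| := by ring
    have h2 : |A| * |B| < |A| * |A| := by gcongr
    have h3 : |A| * |A| = A * A := by rw [← abs_mul, abs_mul_self]
    nlinarith [he]
  have hAne : A ≠ 0 := by
    intro h
    have := hsign 0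
    rw [h] at this
    simpa using this
  -- roots between nodes
  have hrcont : ContinuousOn (fun x => r.eval x) (Set.univ : Set ℝ) :=
    (Polynomial.continuous r).continuousOn
  have hz : ∀ k : Fin d, ∃ z ∈ Set.Ioo (s (k + 1)) (s k), r.eval z = 0 := by
    intro k
    have hklt : (k : ℕ) < d := k.isLt
    have hlt : s (k + 1) < s k := hs_anti k (k + 1) (Nat.lt_succ_self _) hklt
    have h1 := hsign k
    have h2 := hsign (k + 1)
    have hprod : r.eval (s (k + 1)) < 0 ∧ 0 < r.eval (s k) ∨
        r.eval (s k) < 0 ∧ 0 < r.eval (s (k + 1)) := by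
      rcases lt_trichotomy (r.eval (s k)) 0 with h | h | h
      · right
        refine ⟨h, ?_⟩
        rcases lt_trichotomy (r.eval (s (k + 1))) 0 with h' | h' | h'
        · exfalso
          have e1 : ((-1 : ℝ) ^ ((k : ℕ) + 1)) = -((-1 : ℝ) ^ (k : ℕ)) := by ring
          rw [e1] at h2
          nlinarith [sq_nonneg ((-1 : ℝ) ^ (k : ℕ)), sq_abs A]
        · rw [h'] at h2; simp at h2
        · exact h'
      · exfalso; rw [h] at h1; simp at h1
      · left
        refine ⟨?_, h⟩
        rcases lt_trichotomy (r.eval (s (k + 1))) 0 with h' | h' | h'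
        · exact h'
        · rw [h'] at h2; simp at h2
        · exfalso
          have e1 : ((-1 : ℝ) ^ ((k : ℕ) + 1)) = -((-1 : ℝ) ^ (k : ℕ)) := by ring
          rw [e1] at h2
          nlinarith
    rcases hprod with ⟨hneg, hpos⟩ | ⟨hneg, hpos⟩
    · have := intermediate_value_Ioo hlt.le
        ((Polynomial.continuous r).continuousOn : ContinuousOn (fun x => r.eval x) _)
      have h0 : (0 : ℝ) ∈ Set.Ioo (r.eval (s (k + 1))) (r.eval (s k)) := ⟨hneg, hpos⟩
      obtain ⟨z, hz1, hz2⟩ := this h0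
      exact ⟨z, hz1, hz2⟩
    · have := intermediate_value_Ioo' hlt.le
        ((Polynomial.continuous r).continuousOn : ContinuousOn (fun x => r.eval x) _)
      have h0 : (0 : ℝ) ∈ Set.Ioo (r.eval (s k)) (r.eval (s (k + 1))) := ⟨hneg, hpos⟩
      obtain ⟨z, hz1, hz2⟩ := this h0
      exact ⟨z, hz1, hz2⟩
  choose z hz1 hz2 using hz
  have hz_anti : ∀ i j : Fin d, i < j → z j < z i := by
    intro i j hij
    have h1 : z j < s j := (hz1 j).2
    have h2 : s ((i : ℕ) + 1) < z i := (hz1 i).1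
    have h3 : s (j : ℕ) ≤ s ((i : ℕ) + 1) := by
      have hle : (i : ℕ) + 1 ≤ (j : ℕ) := hij
      rcases eq_or_lt_of_le hle with h | h
      · rw [← h]
      · exact (hs_anti _ _ h j.isLt.le).le
    linarith
  have hz_mem : ∀ k : Fin d, z k ∈ Set.Ioo (-1 : ℝ) 1 := by
    intro k
    constructor
    · have h1 : s d ≤ s ((k : ℕ) + 1) := by
        have hle : (k : ℕ) + 1 ≤ d := k.isLt
        rcases eq_or_lt_of_le hle with h | h
        · exact (congrArg s (show (k : ℕ) + 1 = d from h)).ge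
        · exact (hs_anti _ _ h le_rfl).le
      have hsd : s d = -1 := by
        rw [hs]
        simp only []
        rw [show ((d : ℕ) : ℝ) * π / d = π by field_simp]
        exact Real.cos_pi
      linarith [(hz1 k).1]
    · have h1 : s (k : ℕ) ≤ s 0 := by
        rcases Nat.eq_zero_or_pos (k : ℕ) with h | h
        · rw [h]
        · exact (hs_anti 0 _ h k.isLt.le).le
      have hs0 : s 0 = 1 := by
        rw [hs]; simp
      linarith [(hz1 k).2]
  -- assemble d+1 roots
  set f : Fin (d + 1) → ℝ := fun i => if h : (i : ℕ) < d then z ⟨i, h⟩ else y with hf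
  have hf_inj : Function.Injective f := by
    intro i j hij
    by_cases hi : (i : ℕ) < d <;> by_cases hj : (j : ℕ) < d <;>
      simp only [hf, hi, hj, dif_pos, dif_neg, not_false_iff] at hij
    · by_contra hne
      have : (⟨i, hi⟩ : Fin d) ≠ ⟨j, hj⟩ := by
        simp only [ne_eq, Fin.mk.injEq]
        exact fun h => hne (Fin.ext h)
      rcases this.lt_or_gt with h | h
      · exact absurd hij (hz_anti _ _ h).ne'
      · exact absurd hij (hz_anti _ _ h).ne
    · exfalso
      have := hz_mem ⟨i, hi⟩
      rw [hij] at this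
      have := abs_lt.mpr ⟨this.1, this.2⟩
      linarith
    · exfalso
      have := hz_mem ⟨j, hj⟩
      rw [← hij] at this
      have := abs_lt.mpr ⟨this.1, this.2⟩
      linarith
    · have : (i : ℕ) = d := by omega
      have hj' : (j : ℕ) = d := by omega
      exact Fin.ext (by omega)
  have hf_eval : ∀ i, r.eval (f i) = 0 := by
    intro i
    by_cases hi : (i : ℕ) < d
    · simp only [hf, hi, dif_pos]
      exact hz2 ⟨i, hi⟩
    · simp only [hf, hi, dif_neg, not_false_iff]
      simp [hr, ← hA, ← hB]
      ring
  have hrdeg : r.natDegree < d + 1 := by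
    have h1 : (C A * Polynomial.Chebyshev.T ℝ (d : ℤ)).natDegree ≤ d :=
      (natDegree_C_mul_le _ _).trans (natDegree_T_le d)
    have h2 : (C B * p).natDegree ≤ d := (natDegree_C_mul_le _ _).trans hp
    have := natDegree_sub_le (C A * Polynomial.Chebyshev.T ℝ (d : ℤ)) (C B * p)
    rw [hr]
    omega
  have hr0 : r = 0 :=
    Polynomial.eq_zero_of_natDegree_lt_card_of_eval_eq_zero r hf_inj hf_eval
      (by simpa using hrdeg)
  have := hsign 0
  rw [hr0] at this
  simp at this
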